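/- Let ξ₀(s) = ∫₀¹ ((1−x)/(1+x))·s·x^{s−1} dx, fix s₀ > 0 and t₀ ∈ [0,1), and define F(s) = ∫_{s₀}^{s} ξ₀(σ)/σ dσ + log(1 − ξ₀(s₀) + s₀ξ₀(s₀)/s) for s ≥ s₀. Then F(s₀) = 0 and F′(s) < 0 for s > s₀; consequently, for all s > s₀, 1 − exp(−∫_{s₀}^{s} ξ₀(σ)/σ dσ) < (1 − s₀/s)·ξ₀(s₀). -/

import Mathlib

open MeasureTheory Real Set

noncomputable def ξ₀ (s : ℝ) : ℝ :=
  ∫ x in (0:ℝ)..1, ((1 - x) / (1 + x)) * (s * x ^ (s - 1))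

noncomputable def F (s₀ t₀ : ℝ) (s : ℝ) : ℝ :=
  (∫ σ in s₀..s, ξ₀ σ / σ) + Real.log (1 - ξ₀ s₀ + s₀ * ξ₀ s₀ / s)

open Topology Filter

noncomputable def Iw (s : ℝ) : ℝ := ∫ x in Ioc (0:ℝ) 1, x ^ s / (1 + x) ^ 2
noncomputable def Iv (s : ℝ) : ℝ := ∫ x in Ioc (0:ℝ) 1, x ^ s / (1 + x)

lemma xiInt {s : ℝ} (hs : 0 < s) :
    IntervalIntegrable (fun x : ℝ => ((1 - x) / (1 + x)) * (s * x ^ (s - 1))) volume 0 1 := by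
  have hg : IntervalIntegrable (fun x : ℝ => s * x ^ (s - 1)) volume 0 1 :=
    (intervalIntegral.intervalIntegrable_rpow' (by linarith)).const_mul s
  refine hg.mono_fun ?_ ?_
  · apply ContinuousOn.aestronglyMeasurable ?_ measurableSet_uIoc
    intro x hx
    rw [uIoc_of_le (by norm_num : (0:ℝ) ≤ 1)] at hx
    have hx0 : 0 < x := hx.1
    exact (((continuousWithinAt_const.sub continuousWithinAt_id).div
      (continuousWithinAt_const.add continuousWithinAt_id) (by show (1:ℝ) + x ≠ 0; exact ne_of_gt (by linarith))).mul
      (continuousWithinAt_const.mul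
        ((Real.continuousAt_rpow_const x (s-1) (Or.inl hx0.ne')).continuousWithinAt)))
  · refine Filter.eventually_of_mem (self_mem_ae_restrict measurableSet_uIoc) fun x hx => ?_
    rw [uIoc_of_le (by norm_num : (0:ℝ) ≤ 1)] at hx
    obtain ⟨hx0, hx1⟩ := hx
    have h1 : (0:ℝ) ≤ (1 - x) / (1 + x) := by
      apply div_nonneg <;> linarith
    have h2 : (1 - x) / (1 + x) ≤ 1 := by
      rw [div_le_one (by linarith)]; linarith
    have h3 : (0:ℝ) ≤ s * x ^ (s - 1) := by positivity
    simp only [Real.norm_eq_abs, abs_mul]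
    rw [abs_of_nonneg h1]
    nlinarith [abs_nonneg (s * x ^ (s-1)), abs_mul s (x ^ (s-1))]

lemma contOn_pow {s : ℝ} (hs : 0 < s) : Continuous (fun x : ℝ => x ^ s) :=
  Real.continuous_rpow_const hs.le

lemma wInt {s : ℝ} (hs : 0 < s) :
    IntervalIntegrable (fun x : ℝ => -2 / (1 + x) ^ 2 * x ^ s) volume 0 1 := by
  apply ContinuousOn.intervalIntegrable
  intro x hx
  rw [uIcc_of_le (by norm_num : (0:ℝ) ≤ 1)] at hx
  have hne : ((1:ℝ) + x) ^ 2 ≠ 0 := by nlinarith [hx.1]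
  exact ((continuousWithinAt_const.div
    ((continuousWithinAt_const.add continuousWithinAt_id).pow 2)
    (by simpa using hne)).mul ((contOn_pow hs).continuousWithinAt))

lemma xi_eq_Iw {s : ℝ} (hs : 0 < s) : ξ₀ s = 2 * Iw s := by
  have hderiv : ∀ x ∈ Ioo (0:ℝ) 1,
      HasDerivAt (fun x : ℝ => ((1 - x) / (1 + x)) * x ^ s)
        (-2 / (1 + x) ^ 2 * x ^ s + ((1 - x) / (1 + x)) * (s * x ^ (s - 1))) x := by
    intro x hx
    have h1 : HasDerivAt (fun x : ℝ => (1 - x) / (1 + x)) (-2 / (1 + x) ^ 2) x := by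
      have := ((hasDerivAt_const x (1:ℝ)).sub (hasDerivAt_id x)).div
        ((hasDerivAt_const x (1:ℝ)).add (hasDerivAt_id x)) (by show (1:ℝ) + x ≠ 0; exact ne_of_gt (by linarith [hx.1]))
      exact this.congr_deriv (by simp only [Pi.add_apply, Pi.sub_apply, id]; ring)
    have h2 : HasDerivAt (fun x : ℝ => x ^ s) (s * x ^ (s - 1)) x :=
      Real.hasDerivAt_rpow_const (Or.inl hx.1.ne')
    exact h1.mul h2
  have hint : IntervalIntegrable
      (fun x : ℝ => -2 / (1 + x) ^ 2 * x ^ s + ((1 - x) / (1 + x)) * (s * x ^ (s - 1)))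
      volume 0 1 := (wInt hs).add (xiInt hs)
  have ha : Filter.Tendsto (fun x : ℝ => ((1 - x) / (1 + x)) * x ^ s)
      (nhdsWithin 0 (Ioi 0)) (nhds 0) := by
    have : ContinuousAt (fun x : ℝ => ((1 - x) / (1 + x)) * x ^ s) 0 := by
      exact ((continuousAt_const.sub continuousAt_id).div
        (continuousAt_const.add continuousAt_id) (by norm_num)).mul (contOn_pow hs).continuousAt
    have h0 : ((1 - (0:ℝ)) / (1 + 0)) * (0:ℝ) ^ s = 0 := by
      rw [Real.zero_rpow hs.ne']; ring
    have t := this.tendsto.mono_left (nhdsWithin_le_nhds (s := Ioi (0:ℝ)))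
    rwa [h0] at t
  have hb : Filter.Tendsto (fun x : ℝ => ((1 - x) / (1 + x)) * x ^ s)
      (nhdsWithin 1 (Iio 1)) (nhds 0) := by
    have : ContinuousAt (fun x : ℝ => ((1 - x) / (1 + x)) * x ^ s) 1 := by
      exact ((continuousAt_const.sub continuousAt_id).div
        (continuousAt_const.add continuousAt_id) (by norm_num)).mul (contOn_pow hs).continuousAt
    have h0 : ((1 - (1:ℝ)) / (1 + 1)) * (1:ℝ) ^ s = 0 := by
      rw [Real.one_rpow]; ring
    have t := this.tendsto.mono_left (nhdsWithin_le_nhds (s := Iio (1:ℝ)))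
    rwa [h0] at t
  have key := intervalIntegral.integral_eq_sub_of_hasDerivAt_of_tendsto
    (by norm_num : (0:ℝ) < 1) hderiv hint ha hb
  rw [intervalIntegral.integral_add (wInt hs) (xiInt hs)] at key
  have : ξ₀ s = - ∫ x in (0:ℝ)..1, -2 / (1 + x) ^ 2 * x ^ s := by
    unfold ξ₀; linarith
  rw [this, ← intervalIntegral.integral_neg]
  rw [intervalIntegral.integral_of_le (by norm_num : (0:ℝ) ≤ 1)]
  unfold Iw
  rw [← integral_const_mul]
  apply setIntegral_congr_fun measurableSet_Ioc
  intro x hx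
  have : (1 + x) ^ 2 ≠ 0 := by nlinarith [hx.1]
  field_simp

lemma one_sub_xi {s : ℝ} (hs : 0 < s) : 1 - ξ₀ s = 2 * s * Iv s := by
  have hg : IntervalIntegrable (fun x : ℝ => s * x ^ (s - 1)) volume 0 1 :=
    (intervalIntegral.intervalIntegrable_rpow' (by linarith)).const_mul s
  have h1 : (∫ x in (0:ℝ)..1, s * x ^ (s - 1)) = 1 := by
    rw [intervalIntegral.integral_const_mul, integral_rpow (Or.inl (by linarith))]
    rw [Real.one_rpow, Real.zero_rpow (by linarith : s - 1 + 1 ≠ 0)]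
    rw [sub_add_cancel, sub_zero, mul_one_div_cancel hs.ne']
  have h2 : (∫ x in (0:ℝ)..1, (s * x ^ (s - 1) - (1 - x) / (1 + x) * (s * x ^ (s - 1))))
      = 1 - ξ₀ s := by
    rw [intervalIntegral.integral_sub hg (xiInt hs), h1]; rfl
  rw [← h2, intervalIntegral.integral_of_le (by norm_num : (0:ℝ) ≤ 1)]
  unfold Iv
  rw [← integral_const_mul]
  apply setIntegral_congr_fun measurableSet_Ioc
  intro x hx
  have hx0 : 0 < x := hx.1
  have hxs : x ^ s = x ^ (s - 1) * x := by
    rw [show s = (s - 1) + 1 by ring, Real.rpow_add_one hx0.ne']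
    ring_nf
  have h1x : (1:ℝ) + x ≠ 0 := by linarith
  field_simp [hxs]
  ring
  rw [hxs, show (-1:ℝ) + s = s - 1 by ring]

lemma IwInt {s : ℝ} (hs : 0 < s) :
    IntegrableOn (fun x : ℝ => x ^ s / (1 + x) ^ 2) (Ioc 0 1) volume := by
  rw [← intervalIntegrable_iff_integrableOn_Ioc_of_le (by norm_num : (0:ℝ) ≤ 1)]
  apply ContinuousOn.intervalIntegrable
  intro x hx
  rw [uIcc_of_le (by norm_num : (0:ℝ) ≤ 1)] at hx
  have hne : ((1:ℝ) + x) ^ 2 ≠ 0 := by nlinarith [hx.1]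
  exact (contOn_pow hs).continuousWithinAt.div
    ((continuousWithinAt_const.add continuousWithinAt_id).pow 2) hne

lemma IvInt {s : ℝ} (hs : 0 < s) :
    IntegrableOn (fun x : ℝ => x ^ s / (1 + x)) (Ioc 0 1) volume := by
  rw [← intervalIntegrable_iff_integrableOn_Ioc_of_le (by norm_num : (0:ℝ) ≤ 1)]
  apply ContinuousOn.intervalIntegrable
  intro x hx
  rw [uIcc_of_le (by norm_num : (0:ℝ) ≤ 1)] at hx
  have hne : (1:ℝ) + x ≠ 0 := by nlinarith [hx.1]
  exact (contOn_pow hs).continuousWithinAt.div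
    (continuousWithinAt_const.add continuousWithinAt_id) (by simpa using hne)

lemma Iw_pos {s : ℝ} (hs : 0 < s) : 0 < Iw s := by
  unfold Iw
  rw [setIntegral_pos_iff_support_of_nonneg_ae _ (IwInt hs)]
  · have hsub : Ioc (0:ℝ) 1 ⊆ (Function.support fun x : ℝ => x ^ s / (1 + x) ^ 2) ∩ Ioc 0 1 := by
      intro x hx
      have h1 : 0 < x ^ s := Real.rpow_pos_of_pos hx.1 s
      have h2 : (0:ℝ) < (1 + x) ^ 2 := by nlinarith [hx.1]
      exact ⟨ne_of_gt (div_pos h1 h2), hx⟩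
    refine lt_of_lt_of_le ?_ (measure_mono hsub)
    simp [Real.volume_Ioc]
  · filter_upwards [self_mem_ae_restrict measurableSet_Ioc] with x hx
    have : 0 < x ^ s := Real.rpow_pos_of_pos hx.1 s
    positivity

lemma Iv_pos {s : ℝ} (hs : 0 < s) : 0 < Iv s := by
  unfold Iv
  rw [setIntegral_pos_iff_support_of_nonneg_ae _ (IvInt hs)]
  · have hsub : Ioc (0:ℝ) 1 ⊆ (Function.support fun x : ℝ => x ^ s / (1 + x)) ∩ Ioc 0 1 := by
      intro x hx
      have h1 : 0 < x ^ s := Real.rpow_pos_of_pos hx.1 s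
      have h2 : (0:ℝ) < 1 + x := by linarith [hx.1]
      exact ⟨ne_of_gt (div_pos h1 h2), hx⟩
    refine lt_of_lt_of_le ?_ (measure_mono hsub)
    simp [Real.volume_Ioc]
  · filter_upwards [self_mem_ae_restrict measurableSet_Ioc] with x hx
    have h1 : 0 < x ^ s := Real.rpow_pos_of_pos hx.1 s
    have h2 : (0:ℝ) < 1 + x := by linarith [hx.1]
    positivity

lemma xi_pos {s : ℝ} (hs : 0 < s) : 0 < ξ₀ s := by
  rw [xi_eq_Iw hs]; linarith [Iw_pos hs]

lemma xi_lt_one {s : ℝ} (hs : 0 < s) : ξ₀ s < 1 := by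
  have := one_sub_xi hs
  have h2 : 0 < Iv s := Iv_pos hs
  nlinarith

lemma sign_key {s₀ s : ℝ} (h0 : 0 < s₀) (hss : s₀ < s) :
    ∀ a b : ℝ, 0 < a → 0 < b → a < b →
      0 < (a ^ s₀ * b ^ s - a ^ s * b ^ s₀) *
        (1 / (1 + a) ^ 2 * (1 / (1 + b)) - 1 / (1 + b) ^ 2 * (1 / (1 + a))) := by
    intro a b ha hb hab
    have e1 : a ^ s = a ^ s₀ * a ^ (s - s₀) := by
      rw [← Real.rpow_add ha]; ring_nf
    have e2 : b ^ s = b ^ s₀ * b ^ (s - s₀) := by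
      rw [← Real.rpow_add hb]; ring_nf
    have hlt : a ^ (s - s₀) < b ^ (s - s₀) :=
      Real.rpow_lt_rpow ha.le hab (by linarith)
    have hpa : 0 < a ^ s₀ := Real.rpow_pos_of_pos ha _
    have hpb : 0 < b ^ s₀ := Real.rpow_pos_of_pos hb _
    have f1 : 0 < a ^ s₀ * b ^ s - a ^ s * b ^ s₀ := by
      rw [e1, e2]
      have : a ^ s₀ * (b ^ s₀ * b ^ (s - s₀)) - a ^ s₀ * a ^ (s - s₀) * b ^ s₀
          = (a ^ s₀ * b ^ s₀) * (b ^ (s - s₀) - a ^ (s - s₀)) := by ring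
      rw [this]
      exact mul_pos (mul_pos hpa hpb) (by linarith)
    have ha1 : (0:ℝ) < 1 + a := by linarith
    have hb1 : (0:ℝ) < 1 + b := by linarith
    have f2 : 0 < 1 / (1 + a) ^ 2 * (1 / (1 + b)) - 1 / (1 + b) ^ 2 * (1 / (1 + a)) := by
      have heq : 1 / (1 + a) ^ 2 * (1 / (1 + b)) - 1 / (1 + b) ^ 2 * (1 / (1 + a))
          = (b - a) / ((1 + a) ^ 2 * (1 + b) ^ 2) := by
        field_simp
        ring
      rw [heq]
      apply div_pos (by linarith)
      positivity
    exact mul_pos f1 f2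

lemma sign_lemma {s₀ s x y : ℝ} (h0 : 0 < s₀) (hss : s₀ < s) (hx : 0 < x) (hy : 0 < y) :
    0 ≤ (x ^ s₀ * y ^ s - x ^ s * y ^ s₀) *
      (1 / (1 + x) ^ 2 * (1 / (1 + y)) - 1 / (1 + y) ^ 2 * (1 / (1 + x))) := by
  have key := sign_key h0 hss
  rcases lt_trichotomy x y with h | h | h
  · exact (key x y hx hy h).le
  · subst h; simp
  · have := key y x hy hx h
    nlinarith [this]

lemma key_ineq {s₀ s : ℝ} (h0 : 0 < s₀) (h : s₀ < s) :
    Iw s * Iv s₀ < Iw s₀ * Iv s := by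
  have hs : 0 < s := h0.trans h
  set μ : Measure ℝ := volume.restrict (Ioc 0 1) with hμ
  set H : ℝ × ℝ → ℝ := fun z =>
    z.1 ^ s₀ / (1 + z.1) ^ 2 * (z.2 ^ s / (1 + z.2)) -
    z.1 ^ s / (1 + z.1) ^ 2 * (z.2 ^ s₀ / (1 + z.2)) with hH
  have hint1 : Integrable (fun z : ℝ × ℝ => z.1 ^ s₀ / (1 + z.1) ^ 2 * (z.2 ^ s / (1 + z.2)))
      (μ.prod μ) := (IwInt h0).mul_prod (IvInt hs)
  have hint2 : Integrable (fun z : ℝ × ℝ => z.1 ^ s / (1 + z.1) ^ 2 * (z.2 ^ s₀ / (1 + z.2)))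
      (μ.prod μ) := (IwInt hs).mul_prod (IvInt h0)
  have hH_int : Integrable H (μ.prod μ) := hint1.sub hint2
  have hval : ∫ z, H z ∂(μ.prod μ) = Iw s₀ * Iv s - Iw s * Iv s₀ := by
    rw [integral_sub hint1 hint2,
      integral_prod_mul (f := fun x : ℝ => x ^ s₀ / (1 + x) ^ 2) (g := fun y : ℝ => y ^ s / (1 + y)),
      integral_prod_mul (f := fun x : ℝ => x ^ s / (1 + x) ^ 2) (g := fun y : ℝ => y ^ s₀ / (1 + y))]
    rfl
  have hswap : ∫ z, H z.swap ∂(μ.prod μ) = ∫ z, H z ∂(μ.prod μ) := integral_prod_swap H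
  have hG_int : Integrable (fun z => H z + H z.swap) (μ.prod μ) :=
    hH_int.add (hH_int.swap)
  have hG_pos : 0 < ∫ z, (H z + H z.swap) ∂(μ.prod μ) := by
    rw [integral_pos_iff_support_of_nonneg_ae]
    · -- measure of support positive
      have hsub : Ioo (0:ℝ) (1/2) ×ˢ Ioo (1/2:ℝ) 1 ⊆
          Function.support fun z => H z + H z.swap := by
        rintro ⟨x, y⟩ ⟨hx, hy⟩
        have hx0 : 0 < x := hx.1
        have hy0 : 0 < y := by linarith [hy.1]
        have hxy : x < y := by linarith [hx.2, hy.1]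
        have hGeq : H (x, y) + H ((x, y) : ℝ × ℝ).swap
            = (x ^ s₀ * y ^ s - x ^ s * y ^ s₀) *
              (1 / (1 + x) ^ 2 * (1 / (1 + y)) - 1 / (1 + y) ^ 2 * (1 / (1 + x))) := by
          simp only [hH, Prod.swap]
          field_simp
          ring
        apply Function.mem_support.2
        show H (x, y) + H ((x, y) : ℝ × ℝ).swap ≠ 0
        rw [hGeq]
        exact ne_of_gt (sign_key h0 h x y hx0 hy0 hxy)
      refine lt_of_lt_of_le ?_ (measure_mono hsub)
      have e1 : Ioo (0:ℝ) (1/2) ∩ Ioc 0 1 = Ioo 0 (1/2) :=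
        inter_eq_left.2 (fun x hx => ⟨hx.1, by linarith [hx.2]⟩)
      have e2 : Ioo (1/2:ℝ) 1 ∩ Ioc 0 1 = Ioo (1/2) 1 :=
        inter_eq_left.2 (fun x hx => ⟨by linarith [hx.1], hx.2.le⟩)
      rw [Measure.prod_prod, hμ, Measure.restrict_apply measurableSet_Ioo,
        Measure.restrict_apply measurableSet_Ioo, e1, e2, Real.volume_Ioo, Real.volume_Ioo]
      rw [show (1/2 : ℝ) - 0 = 1/2 by norm_num, show (1:ℝ) - 1/2 = 1/2 by norm_num]
      exact ENNReal.mul_pos (by simp) (by simp)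
    · -- a.e. nonneg
      rw [hμ, Measure.prod_restrict]
      filter_upwards [self_mem_ae_restrict ((measurableSet_Ioc).prod measurableSet_Ioc)]
        with z hz
      obtain ⟨hz1, hz2⟩ := hz
      have hGeq : H z + H z.swap
          = (z.1 ^ s₀ * z.2 ^ s - z.1 ^ s * z.2 ^ s₀) *
            (1 / (1 + z.1) ^ 2 * (1 / (1 + z.2)) - 1 / (1 + z.2) ^ 2 * (1 / (1 + z.1))) := by
        simp only [hH, Prod.swap]
        field_simp
        ring
      rw [hGeq]
      exact sign_lemma h0 h hz1.1 hz2.1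
    · exact hG_int
  have : 0 < 2 * ∫ z, H z ∂(μ.prod μ) := by
    rw [two_mul]
    calc 0 < ∫ z, (H z + H z.swap) ∂(μ.prod μ) := hG_pos
    _ = (∫ z, H z ∂(μ.prod μ)) + ∫ z, H z.swap ∂(μ.prod μ) := integral_add hH_int hH_int.swap
    _ = (∫ z, H z ∂(μ.prod μ)) + ∫ z, H z ∂(μ.prod μ) := by rw [hswap]
  rw [hval] at this
  linarith

lemma Iw_continuousAt {s : ℝ} (hs : 0 < s) :
    ContinuousAt (fun t : ℝ => ∫ x in Ioc (0:ℝ) 1, x ^ t / (1 + x) ^ 2) s := by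
  apply MeasureTheory.continuousAt_of_dominated (bound := fun _ => (1:ℝ))
  · refine Filter.Eventually.of_forall fun t => ?_
    apply ContinuousOn.aestronglyMeasurable ?_ measurableSet_Ioc
    intro x hx
    have hne : ((1:ℝ) + x) ^ 2 ≠ 0 := by nlinarith [hx.1]
    exact ((Real.continuousAt_rpow_const x t (Or.inl hx.1.ne')).continuousWithinAt).div
      ((continuousWithinAt_const.add continuousWithinAt_id).pow 2) hne
  · filter_upwards [Ioi_mem_nhds hs] with t ht
    filter_upwards [self_mem_ae_restrict measurableSet_Ioc] with x hx
    have h1 : x ^ t ≤ 1 := Real.rpow_le_one hx.1.le hx.2 (le_of_lt ht)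
    have h2 : 0 < x ^ t := Real.rpow_pos_of_pos hx.1 t
    have h3 : (1:ℝ) ≤ (1 + x) ^ 2 := by nlinarith [hx.1]
    rw [Real.norm_eq_abs, abs_of_nonneg (by positivity)]
    rw [div_le_one_iff]
    left
    exact ⟨by linarith, by linarith⟩
  · exact integrableOn_const (by simp [Real.volume_Ioc])
  · filter_upwards [self_mem_ae_restrict measurableSet_Ioc] with x hx
    exact (Real.continuousAt_const_rpow hx.1.ne').div_const _

lemma xi_continuousAt {s : ℝ} (hs : 0 < s) : ContinuousAt ξ₀ s := by
  have h1 : ContinuousAt (fun t : ℝ => 2 * Iw t) s := by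
    unfold Iw
    exact (Iw_continuousAt hs).const_mul 2
  apply h1.congr
  filter_upwards [Ioi_mem_nhds hs] with t ht
  exact (xi_eq_Iw ht).symm

lemma xi_div_contOn : ContinuousOn (fun σ : ℝ => ξ₀ σ / σ) (Ioi 0) := by
  intro σ hσ
  exact ((xi_continuousAt hσ).continuousWithinAt).div
    continuousWithinAt_id (ne_of_gt hσ)

lemma F_hasDerivAt {s₀ : ℝ} (t₀ : ℝ) (hs₀ : 0 < s₀) {u : ℝ} (hu : 0 < u) :
    HasDerivAt (F s₀ t₀)
      ((ξ₀ u / u) + (s₀ * ξ₀ s₀ * (-(u ^ 2)⁻¹)) / (1 - ξ₀ s₀ + s₀ * ξ₀ s₀ / u)) u := by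
  have hint : IntervalIntegrable (fun σ : ℝ => ξ₀ σ / σ) volume s₀ u := by
    apply ContinuousOn.intervalIntegrable
    apply xi_div_contOn.mono
    intro z hz
    exact (lt_min hs₀ hu).trans_le hz.1
  have hmeas : StronglyMeasurableAtFilter (fun σ : ℝ => ξ₀ σ / σ) (𝓝 u) volume :=
    xi_div_contOn.stronglyMeasurableAtFilter isOpen_Ioi u hu
  have hcontu : ContinuousAt (fun σ : ℝ => ξ₀ σ / σ) u :=
    (xi_continuousAt hu).div continuousAt_id (ne_of_gt hu)
  have h1 : HasDerivAt (fun v => ∫ σ in s₀..v, ξ₀ σ / σ) (ξ₀ u / u) u :=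
    intervalIntegral.integral_hasDerivAt_right hint hmeas hcontu
  have hA1 : ξ₀ s₀ < 1 := xi_lt_one hs₀
  have hA0 : 0 < ξ₀ s₀ := xi_pos hs₀
  have hXpos : 0 < 1 - ξ₀ s₀ + s₀ * ξ₀ s₀ / u := by
    have : 0 < s₀ * ξ₀ s₀ / u := by positivity
    linarith
  have hinner : HasDerivAt (fun v : ℝ => 1 - ξ₀ s₀ + s₀ * ξ₀ s₀ / v)
      (s₀ * ξ₀ s₀ * (-(u ^ 2)⁻¹)) u := by
    have := ((hasDerivAt_inv (ne_of_gt hu)).const_mul (s₀ * ξ₀ s₀)).const_add (1 - ξ₀ s₀)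
    exact this
  have h2 : HasDerivAt (fun v : ℝ => Real.log (1 - ξ₀ s₀ + s₀ * ξ₀ s₀ / v))
      ((s₀ * ξ₀ s₀ * (-(u ^ 2)⁻¹)) / (1 - ξ₀ s₀ + s₀ * ξ₀ s₀ / u)) u :=
    hinner.log (ne_of_gt hXpos)
  exact h1.add h2

lemma F_deriv_neg {s₀ : ℝ} (t₀ : ℝ) (hs₀ : 0 < s₀) {u : ℝ} (hu : s₀ < u) :
    (ξ₀ u / u) + (s₀ * ξ₀ s₀ * (-(u ^ 2)⁻¹)) / (1 - ξ₀ s₀ + s₀ * ξ₀ s₀ / u) < 0 := by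
  have hu0 : 0 < u := hs₀.trans hu
  have hA1 : ξ₀ s₀ < 1 := xi_lt_one hs₀
  have hA0 : 0 < ξ₀ s₀ := xi_pos hs₀
  have hB1 : ξ₀ u < 1 := xi_lt_one hu0
  have hB0 : 0 < ξ₀ u := xi_pos hu0
  have hXpos : 0 < 1 - ξ₀ s₀ + s₀ * ξ₀ s₀ / u := by
    have : 0 < s₀ * ξ₀ s₀ / u := by positivity
    linarith
  -- the key two-point inequality
  have hkey : u * ξ₀ u * (1 - ξ₀ s₀) < s₀ * ξ₀ s₀ * (1 - ξ₀ u) := by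
    have e1 : ξ₀ u = 2 * Iw u := xi_eq_Iw hu0
    have e2 : ξ₀ s₀ = 2 * Iw s₀ := xi_eq_Iw hs₀
    have e3 : 1 - ξ₀ u = 2 * u * Iv u := one_sub_xi hu0
    have e4 : 1 - ξ₀ s₀ = 2 * s₀ * Iv s₀ := one_sub_xi hs₀
    have hk := key_ineq hs₀ hu
    rw [e4, e3, e1, e2]
    nlinarith [mul_lt_mul_of_pos_left hk (show (0:ℝ) < 4 * (s₀ * u) by positivity)]
  have h2' : (s₀ * ξ₀ s₀ * (-(u ^ 2)⁻¹)) / (1 - ξ₀ s₀ + s₀ * ξ₀ s₀ / u)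
      = -(s₀ * ξ₀ s₀ / (u ^ 2 * (1 - ξ₀ s₀ + s₀ * ξ₀ s₀ / u))) := by
    rw [← div_div]
    ring
  rw [h2', ← sub_eq_add_neg, sub_neg]
  have hpos : 0 < u ^ 2 * (1 - ξ₀ s₀ + s₀ * ξ₀ s₀ / u) := by positivity
  rw [div_lt_div_iff₀ hu0 hpos]
  have hexp : ξ₀ u * (u ^ 2 * (1 - ξ₀ s₀ + s₀ * ξ₀ s₀ / u))
      = u * (u * ξ₀ u * (1 - ξ₀ s₀)) + u * (ξ₀ u * (s₀ * ξ₀ s₀)) := by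
    field_simp
  rw [hexp]
  nlinarith [mul_lt_mul_of_pos_left hkey hu0]

theorem forward_curve_comparison (s₀ : ℝ) (hs₀ : 0 < s₀) (t₀ : ℝ)
    (ht₀ : t₀ ∈ Set.Ico (0:ℝ) 1) :
    F s₀ t₀ s₀ = 0 ∧
    (∀ s : ℝ, s₀ < s → deriv (F s₀ t₀) s < 0) ∧
    (∀ s : ℝ, s₀ < s →
      1 - Real.exp (-∫ σ in s₀..s, ξ₀ σ / σ) < (1 - s₀ / s) * ξ₀ s₀) := by
  have hF0 : F s₀ t₀ s₀ = 0 := by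
    unfold F
    rw [intervalIntegral.integral_same]
    have : 1 - ξ₀ s₀ + s₀ * ξ₀ s₀ / s₀ = 1 := by
      field_simp
      ring
    rw [this, Real.log_one, add_zero]
  have hderiv : ∀ s : ℝ, s₀ < s → deriv (F s₀ t₀) s < 0 := by
    intro s hs
    have h1 := (F_hasDerivAt t₀ hs₀ (hs₀.trans hs)).deriv
    rw [h1]
    exact F_deriv_neg t₀ hs₀ hs
  refine ⟨hF0, hderiv, ?_⟩
  intro s hs
  have hFneg : F s₀ t₀ s < 0 := by
    have hanti : StrictAntiOn (F s₀ t₀) (Icc s₀ s) := by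
      apply strictAntiOn_of_deriv_neg (convex_Icc s₀ s)
      · intro u hu
        exact (F_hasDerivAt t₀ hs₀ (hs₀.trans_le hu.1)).continuousAt.continuousWithinAt
      · intro u hu
        rw [interior_Icc] at hu
        exact hderiv u hu.1
    have := hanti (left_mem_Icc.2 hs.le) (right_mem_Icc.2 hs.le) hs
    rwa [hF0] at this
  -- unpack
  have hA1 : ξ₀ s₀ < 1 := xi_lt_one hs₀
  have hA0 : 0 < ξ₀ s₀ := xi_pos hs₀
  have hs0 : 0 < s := hs₀.trans hs
  have hXpos : 0 < 1 - ξ₀ s₀ + s₀ * ξ₀ s₀ / s := by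
    have : 0 < s₀ * ξ₀ s₀ / s := by positivity
    linarith
  have hlog : Real.log (1 - ξ₀ s₀ + s₀ * ξ₀ s₀ / s) < -∫ σ in s₀..s, ξ₀ σ / σ := by
    unfold F at hFneg; linarith
  have hexp : 1 - ξ₀ s₀ + s₀ * ξ₀ s₀ / s < Real.exp (-∫ σ in s₀..s, ξ₀ σ / σ) := by
    calc 1 - ξ₀ s₀ + s₀ * ξ₀ s₀ / s
        = Real.exp (Real.log (1 - ξ₀ s₀ + s₀ * ξ₀ s₀ / s)) := (Real.exp_log hXpos).symm
      _ < Real.exp (-∫ σ in s₀..s, ξ₀ σ / σ) := Real.exp_lt_exp.2 hlog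
  have hring : (1 - s₀ / s) * ξ₀ s₀ = ξ₀ s₀ - s₀ * ξ₀ s₀ / s := by ring
  rw [hring]
  linarith
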